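/- Let L₁ and L₂ be regular languages over Σ. Then the growth indicator of the hairpin completion satisfies λ_{H_κ(L₁,L₂)} = max(λ_{Mid(L₁,L₂)}, √(λ_{MGP(L₁,L₂)})). -/

import Mathlib

/-- The antimorphic extension of an involution on letters to words. -/
def ovr {σ : Type} (bar : σ → σ) (w : List σ) : List σ := (w.map bar).reverse

/-- The hairpin completion `H_κ(L₁, L₂)`. -/
def hairpinCompletion {σ : Type} (bar : σ → σ) (κ : ℕ) (L1 L2 : Language σ) :
    Language σ :=
  { π | ∃ γ α β : List σ,
      π = γ ++ α ++ β ++ ovr bar α ++ ovr bar γ ∧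
      κ ≤ α.length ∧
      (γ ++ α ++ β ++ ovr bar α ∈ L1 ∨ α ++ β ++ ovr bar α ++ ovr bar γ ∈ L2) }

/-- The canonical factorization `(γ, α, β)` of a word `π` of the hairpin completion. -/
def CanonFact {σ : Type} (bar : σ → σ) (κ : ℕ) (L1 L2 : Language σ)
    (π γ α β : List σ) : Prop :=
  π = γ ++ α ++ β ++ ovr bar α ++ ovr bar γ ∧
  α.length = κ ∧
  (γ ++ α ++ β ++ ovr bar α ∈ L1 ∨ α ++ β ++ ovr bar α ++ ovr bar γ ∈ L2) ∧
  (∀ u : List σ, u <+: π → u ∈ L1 → u <+: γ ++ α ++ β ++ ovr bar α) ∧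
  (∀ u : List σ, u <:+ π → u ∈ L2 → u <:+ α ++ β ++ ovr bar α ++ ovr bar γ)

/-- The language of minimal gamma-alpha-prefixes of words of the hairpin completion. -/
def MGP {σ : Type} (bar : σ → σ) (κ : ℕ) (L1 L2 : Language σ) : Language σ :=
  { p | ∃ π γ α β : List σ, π ∈ hairpinCompletion bar κ L1 L2 ∧
      CanonFact bar κ L1 L2 π γ α β ∧ p = γ ++ α }

/-- The language of middle factors of canonical factorizations of words
of the hairpin completion. -/
def Mid {σ : Type} (bar : σ → σ) (κ : ℕ) (L1 L2 : Language σ) : Language σ :=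
  { β | ∃ π γ α : List σ, π ∈ hairpinCompletion bar κ L1 L2 ∧
      CanonFact bar κ L1 L2 π γ α β }

/-- The growth indicator of a language: the infimum of all `λ ≥ 0` such that
`|L ∩ Σ^m| ≤ c·λ^m` for some constant `c > 0` and all `m`. -/
noncomputable def growthInd {σ : Type} (L : Language σ) : ℝ :=
  sInf { l : ℝ | 0 ≤ l ∧ ∃ c : ℝ, 0 < c ∧
    ∀ m : ℕ, (Set.ncard { w : List σ | w ∈ L ∧ w.length = m } : ℝ) ≤ c * l ^ m }

namespace HPC
variable {σ : Type} (bar : σ → σ)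

@[simp] lemma ovr_append (x y : List σ) : ovr bar (x ++ y) = ovr bar y ++ ovr bar x := by
  simp [ovr]

@[simp] lemma ovr_length (x : List σ) : (ovr bar x).length = x.length := by simp [ovr]

@[simp] lemma ovr_nil : ovr bar ([] : List σ) = [] := rfl

lemma ovr_ne_nil {x : List σ} (h : x ≠ []) : ovr bar x ≠ [] := by
  simp [ovr, h]

lemma prefix_append_cases {v x y : List σ} (h : v <+: x ++ y) :
    v <+: x ∨ ∃ w, w <+: y ∧ v = x ++ w := by
  obtain ⟨r, hr⟩ := h
  rcases List.append_eq_append_iff.1 hr with ⟨a', ha, _⟩ | ⟨c', ha, hb⟩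
  · exact Or.inl ⟨a', ha.symm⟩
  · exact Or.inr ⟨c', ⟨r, hb.symm⟩, ha⟩

lemma suffix_append_cases {v x y : List σ} (h : v <:+ x ++ y) :
    v <:+ y ∨ ∃ w, w <:+ x ∧ v = w ++ y := by
  obtain ⟨r, hr⟩ := h
  rcases List.append_eq_append_iff.1 hr with ⟨a', ha, hb⟩ | ⟨c', ha, hb⟩
  · exact Or.inr ⟨a', ⟨r, ha.symm⟩, hb⟩
  · exact Or.inl ⟨c', hb.symm⟩

variable {κ : ℕ} {L1 L2 : Language σ}

/-- restructuring lemma: a "hairpin-shaped" word with wings `x` can be rewritten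
with wings of length exactly `κ` absorbed from/into the middle. -/
lemma lemmaR {α : List σ} (x β : List σ) (hκα : α.length = κ) :
    ∃ α' β' : List σ, α'.length = κ ∧
      x ++ (α ++ (β ++ (ovr bar α ++ ovr bar x))) = α' ++ (β' ++ ovr bar α') := by
  by_cases hge : κ ≤ x.length
  · obtain ⟨x1, x2, rfl, hx1⟩ : ∃ x1 x2 : List σ, x = x1 ++ x2 ∧ x1.length = κ :=
      ⟨x.take κ, x.drop κ, (List.take_append_drop _ _).symm, by simp [min_eq_left hge]⟩
    exact ⟨x1, x2 ++ (α ++ (β ++ (ovr bar α ++ ovr bar x2))), hx1, by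
      simp [List.append_assoc]⟩
  · push_neg at hge
    obtain ⟨a1, a2, rfl, ha1⟩ : ∃ a1 a2 : List σ, α = a1 ++ a2 ∧ a1.length = κ - x.length :=
      ⟨α.take (κ - x.length), α.drop (κ - x.length), (List.take_append_drop _ _).symm, by
        simp at hκα ⊢; omega⟩
    refine ⟨x ++ a1, a2 ++ (β ++ ovr bar a2), by simp [ha1]; omega, by
      simp [List.append_assoc]⟩

/-- Every word of the hairpin completion admits a canonical factorization. -/
lemma exists_canon {π : List σ} (hH : π ∈ hairpinCompletion bar κ L1 L2) :
    ∃ γ α β, CanonFact bar κ L1 L2 π γ α β := by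
  classical
  have hex : ∃ n, ∃ γ α β : List σ, γ.length = n ∧ α.length = κ ∧
      π = γ ++ α ++ β ++ ovr bar α ++ ovr bar γ ∧
      (γ ++ α ++ β ++ ovr bar α ∈ L1 ∨ α ++ β ++ ovr bar α ++ ovr bar γ ∈ L2) := by
    obtain ⟨γ0, α0, β0, hπ0, hlen0, hmem0⟩ := hH
    obtain ⟨a1, a2, rfl, ha1⟩ : ∃ a1 a2 : List σ, α0 = a1 ++ a2 ∧ a1.length = κ :=
      ⟨α0.take κ, α0.drop κ, (List.take_append_drop _ _).symm, by simp [min_eq_left hlen0]⟩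
    refine ⟨γ0.length, γ0, a1, a2 ++ β0 ++ ovr bar a2, rfl, ha1, ?_, ?_⟩
    · rw [hπ0]; simp [List.append_assoc]
    · rcases hmem0 with h | h
      · left; convert h using 1; simp [List.append_assoc]
      · right; convert h using 1; simp [List.append_assoc]
  obtain ⟨γ, α, β, hγn, hακ, hπeq, hmemb⟩ := Nat.find_spec hex
  refine ⟨γ, α, β, hπeq, hακ, hmemb, ?_, ?_⟩
  · -- prefix condition
    intro u hu huL1
    have hWpre : (γ ++ α ++ β ++ ovr bar α) <+: π := ⟨ovr bar γ, hπeq.symm⟩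
    by_cases hle : u.length ≤ (γ ++ α ++ β ++ ovr bar α).length
    · exact List.prefix_of_prefix_length_le hu hWpre hle
    · exfalso
      push_neg at hle
      have huπ : u.length ≤ π.length := hu.length_le
      have hWlen : (γ ++ α ++ β ++ ovr bar α).length = γ.length + κ + β.length + κ := by
        simp [hακ] <;> omega
      have hπlen : π.length = 2 * γ.length + 2 * κ + β.length := by
        rw [hπeq]; simp [hακ] <;> omega
      set m := π.length - u.length with hm
      have hmlt : m < Nat.find hex := by omega
      have hmleγ : m ≤ γ.length := by omega
      obtain ⟨g1, g2, rfl, hg1⟩ : ∃ g1 g2 : List σ, γ = g1 ++ g2 ∧ g1.length = m :=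
        ⟨γ.take m, γ.drop m, (List.take_append_drop _ _).symm, by simp [min_eq_left hmleγ]⟩
      obtain ⟨α', β', hα'κ, hρ⟩ := lemmaR bar g2 β hακ
      have hπ2 : π = g1 ++ ((α' ++ (β' ++ ovr bar α')) ++ ovr bar g1) := by
        rw [hπeq, ← hρ]; simp [List.append_assoc]
      have hueq : u = g1 ++ (α' ++ (β' ++ ovr bar α')) := by
        have h1 : (g1 ++ (α' ++ (β' ++ ovr bar α'))) <+: π :=
          ⟨ovr bar g1, by rw [hπ2]; simp [List.append_assoc]⟩
        have h2 : π.length = (g1 ++ (α' ++ (β' ++ ovr bar α'))).length + m := by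
          rw [hπ2]; simp [hg1] <;> omega
        exact ((List.prefix_of_prefix_length_le hu h1 (by omega)).eq_of_length (by omega))
      refine Nat.find_min hex hmlt ⟨g1, α', β', hg1, hα'κ, ?_, Or.inl ?_⟩
      · rw [hπ2]; simp [List.append_assoc]
      · have : g1 ++ α' ++ β' ++ ovr bar α' = u := by
          rw [hueq]; simp [List.append_assoc]
        rwa [this]
  · -- suffix condition
    intro u hu huL2
    have hWsuf : (α ++ β ++ ovr bar α ++ ovr bar γ) <:+ π :=
      ⟨γ, by rw [hπeq]; simp [List.append_assoc]⟩
    by_cases hle : u.length ≤ (α ++ β ++ ovr bar α ++ ovr bar γ).length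
    · exact List.suffix_of_suffix_length_le hu hWsuf hle
    · exfalso
      push_neg at hle
      have huπ : u.length ≤ π.length := hu.length_le
      have hWlen : (α ++ β ++ ovr bar α ++ ovr bar γ).length = κ + β.length + κ + γ.length := by
        simp [hακ] <;> omega
      have hπlen : π.length = 2 * γ.length + 2 * κ + β.length := by
        rw [hπeq]; simp [hακ] <;> omega
      set m := π.length - u.length with hm
      have hmlt : m < Nat.find hex := by omega
      have hmleγ : m ≤ γ.length := by omega
      obtain ⟨g1, g2, rfl, hg1⟩ : ∃ g1 g2 : List σ, γ = g1 ++ g2 ∧ g1.length = m :=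
        ⟨γ.take m, γ.drop m, (List.take_append_drop _ _).symm, by simp [min_eq_left hmleγ]⟩
      obtain ⟨α', β', hα'κ, hρ⟩ := lemmaR bar g2 β hακ
      have hπ2 : π = g1 ++ ((α' ++ (β' ++ ovr bar α')) ++ ovr bar g1) := by
        rw [hπeq, ← hρ]; simp [List.append_assoc]
      have hueq : u = (α' ++ (β' ++ ovr bar α')) ++ ovr bar g1 := by
        have h1 : ((α' ++ (β' ++ ovr bar α')) ++ ovr bar g1) <:+ π :=
          ⟨g1, by rw [hπ2]⟩
        have h2 : π.length = ((α' ++ (β' ++ ovr bar α')) ++ ovr bar g1).length + m := by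
          rw [hπ2]; simp [hg1] <;> omega
        exact ((List.suffix_of_suffix_length_le hu h1 (by omega)).eq_of_length (by omega))
      refine Nat.find_min hex hmlt ⟨g1, α', β', hg1, hα'κ, ?_, Or.inr ?_⟩
      · rw [hπ2]; simp [List.append_assoc]
      · have : α' ++ β' ++ ovr bar α' ++ ovr bar g1 = u := by
          rw [hueq]; simp [List.append_assoc]
        rwa [this]

lemma canonFact_mem_H {π γ α β : List σ} (h : CanonFact bar κ L1 L2 π γ α β) :
    π ∈ hairpinCompletion bar κ L1 L2 :=
  ⟨γ, α, β, h.1, le_of_eq h.2.1.symm, h.2.2.1⟩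

lemma canon_len_le {π γ α β γ' α' β' : List σ}
    (h : CanonFact bar κ L1 L2 π γ α β) (h' : CanonFact bar κ L1 L2 π γ' α' β') :
    γ.length ≤ γ'.length := by
  obtain ⟨hπ, hακ, hmem, hpre, hsuf⟩ := h
  obtain ⟨hπ', hακ', hmem', hpre', hsuf'⟩ := h'
  have hπlen : π.length = 2 * γ.length + 2 * κ + β.length := by
    rw [hπ]; simp [hακ] <;> omega
  have hπlen' : π.length = 2 * γ'.length + 2 * κ + β'.length := by
    rw [hπ']; simp [hακ'] <;> omega
  rcases hmem' with hw | hw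
  · have hWpre : (γ' ++ α' ++ β' ++ ovr bar α') <+: π := ⟨ovr bar γ', hπ'.symm⟩
    have := (hpre _ hWpre hw).length_le
    simp [hακ, hακ'] at this
    omega
  · have hWsuf : (α' ++ β' ++ ovr bar α' ++ ovr bar γ') <:+ π :=
      ⟨γ', by rw [hπ']; simp [List.append_assoc]⟩
    have := (hsuf _ hWsuf hw).length_le
    simp [hακ, hακ'] at this
    omega

lemma canon_unique {π γ α β γ' α' β' : List σ}
    (h : CanonFact bar κ L1 L2 π γ α β) (h' : CanonFact bar κ L1 L2 π γ' α' β') :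
    γ = γ' ∧ α = α' ∧ β = β' := by
  have hlen : γ.length = γ'.length :=
    le_antisymm (canon_len_le bar h h') (canon_len_le bar h' h)
  obtain ⟨hπ, hακ, -, -, -⟩ := h
  obtain ⟨hπ', hακ', -, -, -⟩ := h'
  have hγp : γ <+: π := ⟨α ++ (β ++ (ovr bar α ++ ovr bar γ)), by rw [hπ]; simp [List.append_assoc]⟩
  have hγp' : γ' <+: π := ⟨α' ++ (β' ++ (ovr bar α' ++ ovr bar γ')), by rw [hπ']; simp [List.append_assoc]⟩
  have hγeq : γ = γ' :=
    (List.prefix_of_prefix_length_le hγp hγp' (le_of_eq hlen)).eq_of_length hlen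
  subst hγeq
  have hαp : γ ++ α <+: π := ⟨β ++ (ovr bar α ++ ovr bar γ), by rw [hπ]; simp [List.append_assoc]⟩
  have hαp' : γ ++ α' <+: π := ⟨β' ++ (ovr bar α' ++ ovr bar γ), by rw [hπ']; simp [List.append_assoc]⟩
  have hαlen : (γ ++ α).length = (γ ++ α').length := by simp [hακ, hακ']
  have hαeq : α = α' := by
    have := (List.prefix_of_prefix_length_le hαp hαp' (le_of_eq hαlen)).eq_of_length hαlen
    exact List.append_cancel_left this
  subst hαeq
  refine ⟨rfl, rfl, ?_⟩
  have heq : γ ++ (α ++ (β ++ (ovr bar α ++ ovr bar γ))) = γ ++ (α ++ (β' ++ (ovr bar α ++ ovr bar γ))) := by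
    simpa [List.append_assoc] using hπ.symm.trans hπ'
  exact List.append_cancel_right
    (List.append_cancel_left (List.append_cancel_left heq))

section DFA
variable {Q1 Q2 : Type} (M1 : DFA σ Q1) (M2 : DFA σ Q2)

lemma mem_lang_iff {L : Language σ} (hM : M1.accepts = L) (w : List σ) :
    w ∈ L ↔ M1.eval w ∈ M1.accept := by rw [← hM]; exact DFA.mem_accepts M1

lemma eval_middle {β β' : List σ} (H : ∀ q, M1.evalFrom q β' = M1.evalFrom q β)
    (A C : List σ) : M1.eval (A ++ (β' ++ C)) = M1.eval (A ++ (β ++ C)) := by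
  simp [DFA.eval, DFA.evalFrom_of_append, H]

lemma canon_replace_beta
    (hM1 : M1.accepts = L1) (hM2 : M2.accepts = L2)
    {π γ α β β' : List σ}
    (h : CanonFact bar κ L1 L2 π γ α β)
    (H1 : ∀ q, M1.evalFrom q β' = M1.evalFrom q β)
    (H2 : ∀ q, M2.evalFrom q β' = M2.evalFrom q β) :
    CanonFact bar κ L1 L2 (γ ++ α ++ β' ++ ovr bar α ++ ovr bar γ) γ α β' := by
  obtain ⟨hπ, hακ, hmem, hpre, hsuf⟩ := h
  refine ⟨rfl, hακ, ?_, ?_, ?_⟩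
  · -- membership
    rcases hmem with hw | hw
    · left
      rw [mem_lang_iff M1 hM1] at hw ⊢
      have e : M1.eval (γ ++ α ++ β' ++ ovr bar α) = M1.eval (γ ++ α ++ β ++ ovr bar α) := by
        have := eval_middle M1 H1 (γ ++ α) (ovr bar α)
        simpa [List.append_assoc] using this
      rwa [e]
    · right
      rw [mem_lang_iff M2 hM2] at hw ⊢
      have e : M2.eval (α ++ β' ++ ovr bar α ++ ovr bar γ)
          = M2.eval (α ++ β ++ ovr bar α ++ ovr bar γ) := by
        have := eval_middle M2 H2 α (ovr bar α ++ ovr bar γ)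
        simpa [List.append_assoc] using this
      rwa [e]
  · -- prefix condition
    intro u hu huL1
    have hW'pre : (γ ++ α ++ β' ++ ovr bar α) <+: (γ ++ α ++ β' ++ ovr bar α ++ ovr bar γ) :=
      ⟨ovr bar γ, rfl⟩
    by_cases hle : u.length ≤ (γ ++ α ++ β' ++ ovr bar α).length
    · exact List.prefix_of_prefix_length_le hu hW'pre hle
    · exfalso
      push_neg at hle
      obtain ⟨v, rfl⟩ : (γ ++ α ++ β' ++ ovr bar α) <+: u :=
        List.prefix_of_prefix_length_le hW'pre hu (le_of_lt hle)
      obtain ⟨r, hr⟩ := hu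
      have hv : v <+: ovr bar γ := ⟨r, by
        have := hr
        rw [List.append_assoc] at this
        exact List.append_cancel_left this⟩
      have e : M1.eval (γ ++ α ++ β' ++ ovr bar α ++ v)
          = M1.eval (γ ++ α ++ β ++ ovr bar α ++ v) := by
        have := eval_middle M1 H1 (γ ++ α) (ovr bar α ++ v)
        simpa [List.append_assoc] using this
      have hbad : (γ ++ α ++ β ++ ovr bar α ++ v) ∈ L1 := by
        rw [mem_lang_iff M1 hM1]
        rw [mem_lang_iff M1 hM1] at huL1
        rw [← e]
        exact huL1
      have hbadpre : (γ ++ α ++ β ++ ovr bar α ++ v) <+: π := by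
        obtain ⟨r', hr'⟩ := hv
        exact ⟨r', by rw [hπ, ← hr']; simp [List.append_assoc]⟩
      have hl1 := (hpre _ hbadpre hbad).length_le
      simp only [List.length_append, ovr_length] at hl1 hle
      omega
  · -- suffix condition
    intro u hu huL2
    have hV'suf : (α ++ β' ++ ovr bar α ++ ovr bar γ) <:+ (γ ++ α ++ β' ++ ovr bar α ++ ovr bar γ) :=
      ⟨γ, by simp [List.append_assoc]⟩
    by_cases hle : u.length ≤ (α ++ β' ++ ovr bar α ++ ovr bar γ).length
    · exact List.suffix_of_suffix_length_le hu hV'suf hle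
    · exfalso
      push_neg at hle
      obtain ⟨v, rfl⟩ : (α ++ β' ++ ovr bar α ++ ovr bar γ) <:+ u :=
        List.suffix_of_suffix_length_le hV'suf hu (le_of_lt hle)
      obtain ⟨r, hr⟩ := hu
      have hv : v <:+ γ := by
        refine ⟨r, ?_⟩
        have h2 : r ++ v ++ (α ++ β' ++ ovr bar α ++ ovr bar γ)
            = γ ++ (α ++ β' ++ ovr bar α ++ ovr bar γ) := by
          simpa [List.append_assoc] using hr
        exact List.append_cancel_right h2
      have e : M2.eval (v ++ (α ++ β' ++ ovr bar α ++ ovr bar γ))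
          = M2.eval (v ++ (α ++ β ++ ovr bar α ++ ovr bar γ)) := by
        have := eval_middle M2 H2 (v ++ α) (ovr bar α ++ ovr bar γ)
        simpa [List.append_assoc] using this
      have hbad : (v ++ (α ++ β ++ ovr bar α ++ ovr bar γ)) ∈ L2 := by
        rw [mem_lang_iff M2 hM2]
        rw [mem_lang_iff M2 hM2] at huL2
        rw [← e]
        exact huL2
      have hbadsuf : (v ++ (α ++ β ++ ovr bar α ++ ovr bar γ)) <:+ π := by
        obtain ⟨r', hr'⟩ := hv
        exact ⟨r', by rw [hπ, ← hr']; simp [List.append_assoc]⟩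
      have hl1 := (hsuf _ hbadsuf hbad).length_le
      simp only [List.length_append, ovr_length] at hl1 hle
      omega
      
variable [Fintype Q1] [Fintype Q2] [DecidableEq Q1] [DecidableEq Q2]

lemma shrink_beta (hM1 : M1.accepts = L1) (hM2 : M2.accepts = L2) :
    ∀ n {π γ α β : List σ}, β.length = n → CanonFact bar κ L1 L2 π γ α β →
    ∃ β' : List σ, β'.length ≤ Fintype.card ((Q1 → Q1) × (Q2 → Q2)) ∧
      CanonFact bar κ L1 L2 (γ ++ α ++ β' ++ ovr bar α ++ ovr bar γ) γ α β' := by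
  intro n
  induction n using Nat.strong_induction_on with
  | _ n ih =>
    intro π γ α β hβn h
    by_cases hN : β.length ≤ Fintype.card ((Q1 → Q1) × (Q2 → Q2))
    · refine ⟨β, hN, ?_⟩
      have hπ := h.1
      rwa [hπ] at h
    · push_neg at hN
      obtain ⟨a, b, hab, hF⟩ := Fintype.exists_ne_map_eq_of_card_lt
        (fun t : Fin (β.length + 1) =>
          ((fun q : Q1 => M1.evalFrom q (β.take t)),
           (fun q : Q2 => M2.evalFrom q (β.take t))))
        (by rw [Fintype.card_fin]; exact Nat.lt_succ_of_lt hN)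
      have key : ∀ t s : ℕ, t < s → s ≤ β.length →
          (fun q : Q1 => M1.evalFrom q (β.take t)) = (fun q => M1.evalFrom q (β.take s)) →
          (fun q : Q2 => M2.evalFrom q (β.take t)) = (fun q => M2.evalFrom q (β.take s)) →
          ∃ β' : List σ, β'.length ≤ Fintype.card ((Q1 → Q1) × (Q2 → Q2)) ∧
            CanonFact bar κ L1 L2 (γ ++ α ++ β' ++ ovr bar α ++ ovr bar γ) γ α β' := by
        intro t s hts hsβ hQ1 hQ2
        set β' := β.take t ++ β.drop s with hβ'
        have hlen' : β'.length < n := by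
          simp only [hβ', List.length_append, List.length_take, List.length_drop]
          omega
        have H1 : ∀ q, M1.evalFrom q β' = M1.evalFrom q β := by
          intro q
          rw [hβ', DFA.evalFrom_of_append, congrFun hQ1 q, ← DFA.evalFrom_of_append,
            List.take_append_drop]
        have H2 : ∀ q, M2.evalFrom q β' = M2.evalFrom q β := by
          intro q
          rw [hβ', DFA.evalFrom_of_append, congrFun hQ2 q, ← DFA.evalFrom_of_append,
            List.take_append_drop]
        have h' := canon_replace_beta bar M1 M2 hM1 hM2 h H1 H2
        exact ih β'.length (by omega) rfl h'
      rcases hab.lt_or_gt with hlt | hlt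
      · refine key a b hlt (by omega) ?_ ?_
        · exact congrArg Prod.fst hF
        · exact congrArg Prod.snd hF
      · refine key b a hlt (by omega) ?_ ?_
        · exact (congrArg Prod.fst hF).symm
        · exact (congrArg Prod.snd hF).symm

lemma eval_head {γ γ' : List σ} (H : ∀ q, M1.evalFrom q γ' = M1.evalFrom q γ)
    (C : List σ) : M1.eval (γ' ++ C) = M1.eval (γ ++ C) := by
  simp [DFA.eval, DFA.evalFrom_of_append, H]

lemma eval_tail {y y' : List σ} (H : ∀ q, M1.evalFrom q y' = M1.evalFrom q y)
    (A : List σ) : M1.eval (A ++ y') = M1.eval (A ++ y) := by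
  simp [DFA.eval, DFA.evalFrom_of_append, H]

lemma canon_replace_gamma
    (hM1 : M1.accepts = L1) (hM2 : M2.accepts = L2)
    {π γ α β γ' : List σ}
    (h : CanonFact bar κ L1 L2 π γ α β)
    (H1 : ∀ q, M1.evalFrom q γ' = M1.evalFrom q γ)
    (H2 : ∀ q, M2.evalFrom q (ovr bar γ') = M2.evalFrom q (ovr bar γ))
    (H3 : ∀ v, v <+: ovr bar γ' → ∃ v₀, v₀ <+: ovr bar γ ∧ v.length ≤ v₀.length ∧
      M1.evalFrom (M1.eval (γ ++ α ++ β ++ ovr bar α)) v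
        = M1.evalFrom (M1.eval (γ ++ α ++ β ++ ovr bar α)) v₀)
    (H4 : ∀ v, v <:+ γ' → ∃ v₀, v₀ <:+ γ ∧ v.length ≤ v₀.length ∧
      M2.evalFrom (M2.eval v) (α ++ β ++ ovr bar α ++ ovr bar γ)
        = M2.evalFrom (M2.eval v₀) (α ++ β ++ ovr bar α ++ ovr bar γ)) :
    CanonFact bar κ L1 L2 (γ' ++ α ++ β ++ ovr bar α ++ ovr bar γ') γ' α β := by
  obtain ⟨hπ, hακ, hmem, hpre, hsuf⟩ := h
  refine ⟨rfl, hακ, ?_, ?_, ?_⟩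
  · rcases hmem with hw | hw
    · left
      rw [mem_lang_iff M1 hM1] at hw ⊢
      have e : M1.eval (γ' ++ α ++ β ++ ovr bar α) = M1.eval (γ ++ α ++ β ++ ovr bar α) := by
        have := eval_head M1 H1 (α ++ (β ++ ovr bar α))
        simpa [List.append_assoc] using this
      rwa [e]
    · right
      rw [mem_lang_iff M2 hM2] at hw ⊢
      have e : M2.eval (α ++ β ++ ovr bar α ++ ovr bar γ')
          = M2.eval (α ++ β ++ ovr bar α ++ ovr bar γ) := by
        exact eval_tail M2 H2 (α ++ β ++ ovr bar α)
      rwa [e]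
  · -- prefix condition
    intro u hu huL1
    have hW'pre : (γ' ++ α ++ β ++ ovr bar α) <+: (γ' ++ α ++ β ++ ovr bar α ++ ovr bar γ') :=
      ⟨ovr bar γ', rfl⟩
    by_cases hle : u.length ≤ (γ' ++ α ++ β ++ ovr bar α).length
    · exact List.prefix_of_prefix_length_le hu hW'pre hle
    · exfalso
      push_neg at hle
      obtain ⟨v, rfl⟩ : (γ' ++ α ++ β ++ ovr bar α) <+: u :=
        List.prefix_of_prefix_length_le hW'pre hu (le_of_lt hle)
      obtain ⟨r, hr⟩ := hu
      have hv : v <+: ovr bar γ' := ⟨r, by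
        have := hr
        rw [List.append_assoc] at this
        exact List.append_cancel_left this⟩
      obtain ⟨v₀, hv₀pre, hv₀len, hv₀eval⟩ := H3 v hv
      have e1 : M1.eval ((γ' ++ α ++ β ++ ovr bar α) ++ v)
          = M1.evalFrom (M1.eval (γ ++ α ++ β ++ ovr bar α)) v := by
        simp [DFA.eval, DFA.evalFrom_of_append, H1]
      have e3 : M1.eval ((γ ++ α ++ β ++ ovr bar α) ++ v₀)
          = M1.evalFrom (M1.eval (γ ++ α ++ β ++ ovr bar α)) v₀ := by
        simp [DFA.eval, DFA.evalFrom_of_append]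
      have hbad : ((γ ++ α ++ β ++ ovr bar α) ++ v₀) ∈ L1 := by
        rw [mem_lang_iff M1 hM1]
        rw [mem_lang_iff M1 hM1] at huL1
        rw [e3, ← hv₀eval, ← e1]
        exact huL1
      have hbadpre : ((γ ++ α ++ β ++ ovr bar α) ++ v₀) <+: π := by
        obtain ⟨r', hr'⟩ := hv₀pre
        exact ⟨r', by rw [hπ, ← hr']; simp [List.append_assoc]⟩
      have hl1 := (hpre _ hbadpre hbad).length_le
      simp only [List.length_append, ovr_length] at hl1 hle
      omega
  · -- suffix condition
    intro u hu huL2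
    have hV'suf : (α ++ β ++ ovr bar α ++ ovr bar γ') <:+ (γ' ++ α ++ β ++ ovr bar α ++ ovr bar γ') :=
      ⟨γ', by simp [List.append_assoc]⟩
    by_cases hle : u.length ≤ (α ++ β ++ ovr bar α ++ ovr bar γ').length
    · exact List.suffix_of_suffix_length_le hu hV'suf hle
    · exfalso
      push_neg at hle
      obtain ⟨v, rfl⟩ : (α ++ β ++ ovr bar α ++ ovr bar γ') <:+ u :=
        List.suffix_of_suffix_length_le hV'suf hu (le_of_lt hle)
      obtain ⟨r, hr⟩ := hu
      have hv : v <:+ γ' := by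
        refine ⟨r, ?_⟩
        have h2 : r ++ v ++ (α ++ β ++ ovr bar α ++ ovr bar γ')
            = γ' ++ (α ++ β ++ ovr bar α ++ ovr bar γ') := by
          simpa [List.append_assoc] using hr
        exact List.append_cancel_right h2
      obtain ⟨v₀, hv₀suf, hv₀len, hv₀eval⟩ := H4 v hv
      have e1 : M2.eval (v ++ (α ++ β ++ ovr bar α ++ ovr bar γ'))
          = M2.evalFrom (M2.eval v) (α ++ β ++ ovr bar α ++ ovr bar γ) := by
        simp [DFA.eval, DFA.evalFrom_of_append, H2]
      have e2 : M2.eval (v₀ ++ (α ++ β ++ ovr bar α ++ ovr bar γ))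
          = M2.evalFrom (M2.eval v₀) (α ++ β ++ ovr bar α ++ ovr bar γ) := by
        simp [DFA.eval, DFA.evalFrom_of_append]
      have hbad : (v₀ ++ (α ++ β ++ ovr bar α ++ ovr bar γ)) ∈ L2 := by
        rw [mem_lang_iff M2 hM2]
        rw [mem_lang_iff M2 hM2] at huL2
        rw [e2, ← hv₀eval, ← e1]
        exact huL2
      have hbadsuf : (v₀ ++ (α ++ β ++ ovr bar α ++ ovr bar γ)) <:+ π := by
        obtain ⟨r', hr'⟩ := hv₀suf
        exact ⟨r', by rw [hπ, ← hr']; simp [List.append_assoc]⟩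
      have hl1 := (hsuf _ hbadsuf hbad).length_le
      simp only [List.length_append, ovr_length] at hl1 hle
      omega

lemma shrink_gamma (hM1 : M1.accepts = L1) (hM2 : M2.accepts = L2) :
    ∀ n {π γ α β : List σ}, γ.length = n → CanonFact bar κ L1 L2 π γ α β →
    ∃ γ' : List σ, γ'.length ≤ Fintype.card ((Q1 → Q1) × Q1 × (Q2 → Q2) × (Q2 → Q2)) ∧
      CanonFact bar κ L1 L2 (γ' ++ α ++ β ++ ovr bar α ++ ovr bar γ') γ' α β := by
  intro n
  induction n using Nat.strong_induction_on with
  | _ n ih =>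
    intro π γ α β hγn h
    by_cases hN : γ.length ≤ Fintype.card ((Q1 → Q1) × Q1 × (Q2 → Q2) × (Q2 → Q2))
    · refine ⟨γ, hN, ?_⟩
      have hπ := h.1
      rwa [hπ] at h
    · push_neg at hN
      set sstar := M1.eval (γ ++ α ++ β ++ ovr bar α) with hsstar
      set rest := α ++ β ++ ovr bar α ++ ovr bar γ with hrest
      obtain ⟨a, b, hab, hF⟩ := Fintype.exists_ne_map_eq_of_card_lt
        (fun t : Fin (γ.length + 1) =>
          ((fun q : Q1 => M1.evalFrom q (γ.take t)),
           M1.evalFrom sstar (ovr bar (γ.drop t)),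
           (fun q : Q2 => M2.evalFrom (M2.evalFrom q (γ.drop t)) rest),
           (fun q : Q2 => M2.evalFrom q (ovr bar (γ.take t)))))
        (by rw [Fintype.card_fin]; exact Nat.lt_succ_of_lt hN)
      have key : ∀ t s : ℕ, t < s → s ≤ γ.length →
          (fun q : Q1 => M1.evalFrom q (γ.take t)) = (fun q => M1.evalFrom q (γ.take s)) →
          M1.evalFrom sstar (ovr bar (γ.drop t)) = M1.evalFrom sstar (ovr bar (γ.drop s)) →
          (fun q : Q2 => M2.evalFrom (M2.evalFrom q (γ.drop t)) rest)
            = (fun q => M2.evalFrom (M2.evalFrom q (γ.drop s)) rest) →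
          (fun q : Q2 => M2.evalFrom q (ovr bar (γ.take t)))
            = (fun q => M2.evalFrom q (ovr bar (γ.take s))) →
          ∃ γ' : List σ, γ'.length ≤ Fintype.card ((Q1 → Q1) × Q1 × (Q2 → Q2) × (Q2 → Q2)) ∧
            CanonFact bar κ L1 L2 (γ' ++ α ++ β ++ ovr bar α ++ ovr bar γ') γ' α β := by
        intro t s hts hsγ hA hB hC hD
        set γ'' := γ.take t ++ γ.drop s with hγ''
        have hlen' : γ''.length < n := by
          simp only [hγ'', List.length_append, List.length_take, List.length_drop]
          omega
        have hovr'' : ovr bar γ'' = ovr bar (γ.drop s) ++ ovr bar (γ.take t) := by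
          simp [hγ'']
        have hovrγs : ovr bar γ = ovr bar (γ.drop s) ++ ovr bar (γ.take s) := by
          conv_lhs => rw [← List.take_append_drop s γ]
          exact ovr_append bar _ _
        have hovrγt : ovr bar γ = ovr bar (γ.drop t) ++ ovr bar (γ.take t) := by
          conv_lhs => rw [← List.take_append_drop t γ]
          exact ovr_append bar _ _
        have H1 : ∀ q, M1.evalFrom q γ'' = M1.evalFrom q γ := by
          intro q
          rw [hγ'', DFA.evalFrom_of_append, congrFun hA q, ← DFA.evalFrom_of_append,
            List.take_append_drop]
        have H2 : ∀ q, M2.evalFrom q (ovr bar γ'') = M2.evalFrom q (ovr bar γ) := by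
          intro q
          rw [hovr'', DFA.evalFrom_of_append, congrFun hD _, ← DFA.evalFrom_of_append,
            ← hovrγs]
        have H3 : ∀ v, v <+: ovr bar γ'' → ∃ v₀, v₀ <+: ovr bar γ ∧
            v.length ≤ v₀.length ∧
            M1.evalFrom sstar v = M1.evalFrom sstar v₀ := by
          intro v hv
          rw [hovr''] at hv
          rcases prefix_append_cases hv with hcase | ⟨w, hw, rfl⟩
          · exact ⟨v, by rw [hovrγs]; exact hcase.trans (List.prefix_append _ _), le_refl _, rfl⟩
          · refine ⟨ovr bar (γ.drop t) ++ w, ?_, ?_, ?_⟩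
            · obtain ⟨r2, hr2⟩ := hw
              exact ⟨r2, by rw [List.append_assoc, hr2, ← hovrγt]⟩
            · simp only [List.length_append, ovr_length, List.length_drop]
              omega
            · rw [DFA.evalFrom_of_append, DFA.evalFrom_of_append, ← hB]
        have H4 : ∀ v, v <:+ γ'' → ∃ v₀, v₀ <:+ γ ∧
            v.length ≤ v₀.length ∧
            M2.evalFrom (M2.eval v) rest = M2.evalFrom (M2.eval v₀) rest := by
          intro v hv
          rcases suffix_append_cases hv with hcase | ⟨w, hw, rfl⟩
          · exact ⟨v, hcase.trans (List.drop_suffix s γ), le_refl _, rfl⟩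
          · refine ⟨w ++ γ.drop t, ?_, ?_, ?_⟩
            · obtain ⟨r2, hr2⟩ := hw
              exact ⟨r2, by rw [← List.append_assoc, hr2, List.take_append_drop]⟩
            · simp only [List.length_append, List.length_drop]
              omega
            · simp only [DFA.eval, DFA.evalFrom_of_append]
              exact (congrFun hC (M2.evalFrom M2.start w)).symm
        have h' := canon_replace_gamma bar M1 M2 hM1 hM2 h H1 H2
          (by rw [← hsstar]; exact H3) (by rw [← hrest]; exact H4)
        exact ih γ''.length (by omega) rfl h'
      rcases hab.lt_or_gt with hlt | hlt
      · exact key a b hlt (by omega) (congrArg (fun p => p.1) hF)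
          (congrArg (fun p => p.2.1) hF) (congrArg (fun p => p.2.2.1) hF)
          (congrArg (fun p => p.2.2.2) hF)
      · exact key b a hlt (by omega) (congrArg (fun p => p.1) hF).symm
          (congrArg (fun p => p.2.1) hF).symm (congrArg (fun p => p.2.2.1) hF).symm
          (congrArg (fun p => p.2.2.2) hF).symm

end DFA

section Growth
variable [Fintype σ]

def SG (L : Language σ) : Set ℝ :=
  { l : ℝ | 0 ≤ l ∧ ∃ c : ℝ, 0 < c ∧
    ∀ m : ℕ, (Set.ncard { w : List σ | w ∈ L ∧ w.length = m } : ℝ) ≤ c * l ^ m }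

lemma growthInd_eq (L : Language σ) : growthInd L = sInf (SG L) := rfl

lemma lang_fin (L : Language σ) (m : ℕ) : {w : List σ | w ∈ L ∧ w.length = m}.Finite :=
  (List.finite_length_eq σ m).subset (fun w hw => hw.2)

lemma cnt_le_pow (L : Language σ) (m : ℕ) :
    Set.ncard {w : List σ | w ∈ L ∧ w.length = m} ≤ Fintype.card σ ^ m := by
  have h1 : Set.ncard {w : List σ | w ∈ L ∧ w.length = m}
      ≤ Set.ncard {w : List σ | w.length = m} :=
    Set.ncard_le_ncard (fun w hw => hw.2) (List.finite_length_eq σ m)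
  have h2 : Set.ncard {w : List σ | w.length = m} = Fintype.card σ ^ m := by
    have e : Nat.card ↥{w : List σ | w.length = m} = Nat.card (List.Vector σ m) :=
      Nat.card_congr (Equiv.refl _)
    rw [← Nat.card_coe_set_eq, e, Nat.card_eq_fintype_card, card_vector]
  omega

lemma SG_nonempty (L : Language σ) : (SG L).Nonempty := by
  refine ⟨(Fintype.card σ : ℝ), Nat.cast_nonneg _, 1, one_pos, fun m => ?_⟩
  rw [one_mul]
  calc (Set.ncard {w : List σ | w ∈ L ∧ w.length = m} : ℝ)
      ≤ ((Fintype.card σ ^ m : ℕ) : ℝ) := by exact_mod_cast cnt_le_pow L m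
    _ = (Fintype.card σ : ℝ) ^ m := by push_cast; ring

lemma SG_bddBelow (L : Language σ) : BddBelow (SG L) := ⟨0, fun _ hl => hl.1⟩

lemma SG_upward {L : Language σ} {l l' : ℝ} (h : l ∈ SG L) (hle : l ≤ l') : l' ∈ SG L := by
  obtain ⟨h0, c, hc, hb⟩ := h
  exact ⟨le_trans h0 hle, c, hc, fun m => le_trans (hb m)
    (mul_le_mul_of_nonneg_left (pow_le_pow_left₀ h0 hle m) (le_of_lt hc))⟩

lemma mem_SG_of_gt {L : Language σ} {l : ℝ} (h : growthInd L < l) : l ∈ SG L := by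
  obtain ⟨s, hs, hsl⟩ := exists_lt_of_csInf_lt (SG_nonempty L) h
  exact SG_upward hs (le_of_lt hsl)

lemma growthInd_nonneg (L : Language σ) : 0 ≤ growthInd L :=
  le_csInf (SG_nonempty L) (fun _ hb => hb.1)

lemma growthInd_le_of_mem {L : Language σ} {l : ℝ} (h : l ∈ SG L) : growthInd L ≤ l :=
  csInf_le (SG_bddBelow L) h

lemma le_of_forall_gt {x y : ℝ} (H : ∀ l : ℝ, x < l → y ≤ l) : y ≤ x := by
  by_contra hxy
  push_neg at hxy
  have := H ((x + y) / 2) (by linarith)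
  linarith

end Growth

section Counting
variable [Fintype σ]

lemma cnt_H_le (m : ℕ) :
    (Set.ncard {w : List σ | w ∈ hairpinCompletion bar κ L1 L2 ∧ w.length = m})
      ≤ ∑ i ∈ Finset.range (m/2+1),
          (Set.ncard {w : List σ | w ∈ MGP bar κ L1 L2 ∧ w.length = i}) *
          (Set.ncard {w : List σ | w ∈ Mid bar κ L1 L2 ∧ w.length = (m - 2*i)}) := by
  classical
  have hsub : (lang_fin (hairpinCompletion bar κ L1 L2) m).toFinset ⊆
      (Finset.range (m/2+1)).biUnion (fun i =>
      (((lang_fin (MGP bar κ L1 L2) i).toFinset ×ˢ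
        (lang_fin (Mid bar κ L1 L2) (m - 2*i)).toFinset).image
        (fun pb : List σ × List σ => pb.1 ++ pb.2 ++ ovr bar pb.1))) := by
    intro w hw
    rw [Set.Finite.mem_toFinset] at hw
    obtain ⟨hwH, hwlen⟩ := hw
    obtain ⟨γ, α, β, hc⟩ := exists_canon bar hwH
    have hπeq := hc.1
    have hακ := hc.2.1
    have hwl : w.length = 2 * (γ.length + κ) + β.length := by
      rw [hπeq]; simp [hακ] <;> omega
    rw [Finset.mem_biUnion]
    refine ⟨(γ ++ α).length, ?_, ?_⟩
    · rw [Finset.mem_range]; simp [hακ]; omega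
    · rw [Finset.mem_image]
      refine ⟨(γ ++ α, β), ?_, ?_⟩
      · rw [Finset.mem_product]
        constructor
        · rw [Set.Finite.mem_toFinset]
          exact ⟨⟨w, γ, α, β, hwH, hc, rfl⟩, rfl⟩
        · rw [Set.Finite.mem_toFinset]
          refine ⟨⟨w, γ, α, hwH, hc⟩, ?_⟩
          simp [hακ]; omega
      · show γ ++ α ++ β ++ ovr bar (γ ++ α) = w
        rw [hπeq]; simp [List.append_assoc]
  rw [Set.ncard_eq_toFinset_card _ (lang_fin _ m)]
  refine le_trans (Finset.card_le_card hsub) (le_trans Finset.card_biUnion_le ?_)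
  apply Finset.sum_le_sum
  intro i _
  refine le_trans Finset.card_image_le ?_
  rw [Finset.card_product]
  rw [Set.ncard_eq_toFinset_card _ (lang_fin _ i),
    Set.ncard_eq_toFinset_card _ (lang_fin _ (m - 2*i))]

variable {Q1 Q2 : Type} (M1 : DFA σ Q1) (M2 : DFA σ Q2)
  [Fintype Q1] [Fintype Q2] [DecidableEq Q1] [DecidableEq Q2]

lemma cnt_Mid_le (hM1 : M1.accepts = L1) (hM2 : M2.accepts = L2) (j : ℕ) :
    Set.ncard {w : List σ | w ∈ Mid bar κ L1 L2 ∧ w.length = j}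
      ≤ ∑ g ∈ Finset.range (Fintype.card ((Q1 → Q1) × Q1 × (Q2 → Q2) × (Q2 → Q2)) + 1),
          Set.ncard {w : List σ | w ∈ hairpinCompletion bar κ L1 L2 ∧
            w.length = j + 2*g + 2*κ} := by
  classical
  set N' := Fintype.card ((Q1 → Q1) × Q1 × (Q2 → Q2) × (Q2 → Q2)) with hN'
  set P : List σ → List σ → Prop := fun β π => π ∈ hairpinCompletion bar κ L1 L2 ∧
    ∃ γ α, CanonFact bar κ L1 L2 π γ α β ∧ γ.length ≤ N' with hP
  have hch : ∀ β ∈ Mid bar κ L1 L2, ∃ π, P β π := by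
    intro β hβ
    obtain ⟨π, γ, α, hH, hc⟩ := hβ
    obtain ⟨γ', hγ'len, hc'⟩ := shrink_gamma bar M1 M2 hM1 hM2 γ.length rfl hc
    exact ⟨_, canonFact_mem_H bar hc', γ', α, hc', hγ'len⟩
  set f : List σ → List σ := fun β => if h : ∃ π, P β π then h.choose else [] with hf
  have hfspec : ∀ β ∈ Mid bar κ L1 L2, P β (f β) := by
    intro β hβ
    have h := hch β hβ
    show P β (if h' : ∃ π, P β π then h'.choose else [])
    rw [dif_pos h]
    exact h.choose_spec
  rw [Set.ncard_eq_toFinset_card _ (lang_fin _ j)]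
  have hmaps : ∀ β ∈ (lang_fin (Mid bar κ L1 L2) j).toFinset,
      f β ∈ (Finset.range (N' + 1)).biUnion (fun g =>
        (lang_fin (hairpinCompletion bar κ L1 L2) (j + 2*g + 2*κ)).toFinset) := by
    intro β hβ
    rw [Set.Finite.mem_toFinset] at hβ
    obtain ⟨hβMid, hβlen⟩ := hβ
    obtain ⟨hfH, γ, α, hc, hγlen⟩ := hfspec β hβMid
    rw [Finset.mem_biUnion]
    refine ⟨γ.length, Finset.mem_range.2 (by omega), ?_⟩
    rw [Set.Finite.mem_toFinset]
    refine ⟨hfH, ?_⟩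
    rw [hc.1]
    have := hc.2.1
    simp [this] <;> omega
  have hinj : Set.InjOn f ((lang_fin (Mid bar κ L1 L2) j).toFinset : Set (List σ)) := by
    intro x hx y hy hxy
    simp only [Finset.coe_sort_coe, Finset.mem_coe, Set.Finite.mem_toFinset] at hx hy
    obtain ⟨-, γ₁, α₁, hc₁, -⟩ := hfspec x hx.1
    obtain ⟨-, γ₂, α₂, hc₂, -⟩ := hfspec y hy.1
    rw [hxy] at hc₁
    exact (canon_unique bar hc₁ hc₂).2.2
  refine le_trans (Finset.card_le_card_of_injOn f hmaps hinj)
    (le_trans Finset.card_biUnion_le ?_)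
  apply Finset.sum_le_sum
  intro g _
  rw [Set.ncard_eq_toFinset_card _ (lang_fin _ _)]

lemma cnt_MGP_le (hM1 : M1.accepts = L1) (hM2 : M2.accepts = L2) (i : ℕ) :
    Set.ncard {w : List σ | w ∈ MGP bar κ L1 L2 ∧ w.length = i}
      ≤ ∑ b ∈ Finset.range (Fintype.card ((Q1 → Q1) × (Q2 → Q2)) + 1),
          Set.ncard {w : List σ | w ∈ hairpinCompletion bar κ L1 L2 ∧
            w.length = 2*i + b} := by
  classical
  set N := Fintype.card ((Q1 → Q1) × (Q2 → Q2)) with hN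
  set P : List σ → List σ → Prop := fun p π => π ∈ hairpinCompletion bar κ L1 L2 ∧
    ∃ γ α β, CanonFact bar κ L1 L2 π γ α β ∧ γ ++ α = p ∧ β.length ≤ N with hP
  have hch : ∀ p ∈ MGP bar κ L1 L2, ∃ π, P p π := by
    intro p hp
    obtain ⟨π, γ, α, β, hH, hc, rfl⟩ := hp
    obtain ⟨β', hβ'len, hc'⟩ := shrink_beta bar M1 M2 hM1 hM2 β.length rfl hc
    exact ⟨_, canonFact_mem_H bar hc', γ, α, β', hc', rfl, hβ'len⟩
  set f : List σ → List σ := fun p => if h : ∃ π, P p π then h.choose else [] with hf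
  have hfspec : ∀ p ∈ MGP bar κ L1 L2, P p (f p) := by
    intro p hp
    have h := hch p hp
    show P p (if h' : ∃ π, P p π then h'.choose else [])
    rw [dif_pos h]
    exact h.choose_spec
  rw [Set.ncard_eq_toFinset_card _ (lang_fin _ i)]
  have hmaps : ∀ p ∈ (lang_fin (MGP bar κ L1 L2) i).toFinset,
      f p ∈ (Finset.range (N + 1)).biUnion (fun b =>
        (lang_fin (hairpinCompletion bar κ L1 L2) (2*i + b)).toFinset) := by
    intro p hp
    rw [Set.Finite.mem_toFinset] at hp
    obtain ⟨hpMGP, hplen⟩ := hp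
    obtain ⟨hfH, γ, α, β, hc, hpeq, hβlen⟩ := hfspec p hpMGP
    rw [Finset.mem_biUnion]
    refine ⟨β.length, Finset.mem_range.2 (by omega), ?_⟩
    rw [Set.Finite.mem_toFinset]
    refine ⟨hfH, ?_⟩
    rw [hc.1]
    have hακ := hc.2.1
    have hplen2 : γ.length + α.length = i := by rw [← hplen, ← hpeq]; simp
    simp [hακ] at hplen2 ⊢
    omega
  have hinj : Set.InjOn f ((lang_fin (MGP bar κ L1 L2) i).toFinset : Set (List σ)) := by
    intro x hx y hy hxy
    simp only [Finset.coe_sort_coe, Finset.mem_coe, Set.Finite.mem_toFinset] at hx hy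
    obtain ⟨-, γ₁, α₁, β₁, hc₁, hp₁, -⟩ := hfspec x hx.1
    obtain ⟨-, γ₂, α₂, β₂, hc₂, hp₂, -⟩ := hfspec y hy.1
    rw [hxy] at hc₁
    obtain ⟨hγ, hα, -⟩ := canon_unique bar hc₁ hc₂
    rw [← hp₁, ← hp₂, hγ, hα]
  refine le_trans (Finset.card_le_card_of_injOn f hmaps hinj)
    (le_trans Finset.card_biUnion_le ?_)
  apply Finset.sum_le_sum
  intro b _
  rw [Set.ncard_eq_toFinset_card _ (lang_fin _ _)]

end Counting

end HPC

open HPC in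
theorem growth_of_hairpin_completion_eq
    {σ : Type} [Fintype σ] (hσ : 2 ≤ Fintype.card σ)
    (bar : σ → σ) (hbar : ∀ a, bar (bar a) = a)
    (κ : ℕ) (hκ : 1 ≤ κ)
    (L1 L2 : Language σ) (h1 : L1.IsRegular) (h2 : L2.IsRegular) :
    growthInd (hairpinCompletion bar κ L1 L2) =
      max (growthInd (Mid bar κ L1 L2))
        (Real.sqrt (growthInd (MGP bar κ L1 L2))) := by
  classical
  obtain ⟨Q1, fQ1, M1, hM1⟩ := h1
  obtain ⟨Q2, fQ2, M2, hM2⟩ := h2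
  haveI := fQ1
  haveI := fQ2
  haveI : DecidableEq Q1 := Classical.decEq _
  haveI : DecidableEq Q2 := Classical.decEq _
  have hA0 : 0 ≤ growthInd (Mid bar κ L1 L2) := growthInd_nonneg _
  have hB0 : 0 ≤ Real.sqrt (growthInd (MGP bar κ L1 L2)) := Real.sqrt_nonneg _
  have hgH0 : 0 ≤ growthInd (hairpinCompletion bar κ L1 L2) := growthInd_nonneg _
  apply le_antisymm
  · -- upper bound
    apply HPC.le_of_forall_gt
    intro l hl
    have hl0 : 0 < l :=
      lt_of_le_of_lt (le_trans hB0 (le_max_right (growthInd (Mid bar κ L1 L2)) _)) hl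
    obtain ⟨l1, hl1⟩ : ∃ x : ℝ,
        x = (max (growthInd (Mid bar κ L1 L2)) (Real.sqrt (growthInd (MGP bar κ L1 L2))) + l)/2 :=
      ⟨_, rfl⟩
    have hmax0 : 0 ≤ max (growthInd (Mid bar κ L1 L2)) (Real.sqrt (growthInd (MGP bar κ L1 L2))) :=
      le_trans hB0 (le_max_right _ _)
    have hl1l : l1 < l := by rw [hl1]; linarith
    have hl1pos : 0 < l1 := by rw [hl1]; linarith
    have hAl1 : growthInd (Mid bar κ L1 L2) < l1 := by
      have := le_max_left (growthInd (Mid bar κ L1 L2)) (Real.sqrt (growthInd (MGP bar κ L1 L2)))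
      rw [hl1]; linarith
    have hBl1 : Real.sqrt (growthInd (MGP bar κ L1 L2)) < l1 := by
      have := le_max_right (growthInd (Mid bar κ L1 L2)) (Real.sqrt (growthInd (MGP bar κ L1 L2)))
      rw [hl1]; linarith
    obtain ⟨l2, hl2⟩ : ∃ x : ℝ, x = (Real.sqrt (growthInd (MGP bar κ L1 L2)) + l1)/2 := ⟨_, rfl⟩
    have hl2pos : 0 < l2 := by rw [hl2]; linarith
    have hl2l1 : l2 < l1 := by rw [hl2]; linarith
    have hBl2 : Real.sqrt (growthInd (MGP bar κ L1 L2)) < l2 := by rw [hl2]; linarith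
    obtain ⟨-, c₂, hc₂, hb₂⟩ := mem_SG_of_gt hAl1
    have hMGPl2 : growthInd (MGP bar κ L1 L2) < l2^2 := (Real.sqrt_lt' hl2pos).1 hBl2
    obtain ⟨-, c₁, hc₁, hb₁⟩ := mem_SG_of_gt hMGPl2
    apply growthInd_le_of_mem
    obtain ⟨q, hq⟩ : ∃ x : ℝ, x = (l2/l1)^2 := ⟨_, rfl⟩
    have hq0 : 0 ≤ q := by rw [hq]; exact sq_nonneg _
    have hq1 : q < 1 := by
      have hlt : l2/l1 < 1 := (div_lt_one hl1pos).2 hl2l1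
      have h0 : 0 ≤ l2/l1 := by positivity
      rw [hq]; exact pow_lt_one₀ h0 hlt (by norm_num)
    have h1q : 0 < 1 - q := by linarith
    have hgeom : ∀ k : ℕ, ∑ x ∈ Finset.range k, q ^ x ≤ (1 - q)⁻¹ := by
      intro k
      rw [geom_sum_eq (by linarith : q ≠ 1)]
      have e : (q^k - 1)/(q - 1) = (1 - q^k)/(1 - q) := by
        rw [← neg_div_neg_eq]; ring_nf
      rw [e, ← one_div]
      apply (div_le_div_iff_of_pos_right h1q).2
      nlinarith [pow_nonneg hq0 k]
    refine ⟨le_of_lt hl0, c₁*c₂*(1-q)⁻¹, mul_pos (mul_pos hc₁ hc₂) (inv_pos.2 h1q), ?_⟩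
    intro m
    calc ((Set.ncard {w : List σ | w ∈ hairpinCompletion bar κ L1 L2 ∧ w.length = m}) : ℝ)
        ≤ ((∑ i ∈ Finset.range (m/2+1),
            (Set.ncard {w : List σ | w ∈ MGP bar κ L1 L2 ∧ w.length = i}) *
            (Set.ncard {w : List σ | w ∈ Mid bar κ L1 L2 ∧ w.length = (m - 2*i)}) : ℕ) : ℝ) :=
          Nat.cast_le.2 (cnt_H_le bar m)
      _ = ∑ i ∈ Finset.range (m/2+1),
            ((Set.ncard {w : List σ | w ∈ MGP bar κ L1 L2 ∧ w.length = i} : ℝ) *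
            (Set.ncard {w : List σ | w ∈ Mid bar κ L1 L2 ∧ w.length = (m - 2*i)} : ℝ)) := by
          push_cast; rfl
      _ ≤ ∑ i ∈ Finset.range (m/2+1), (c₁ * (l2^2)^i) * (c₂ * l1^(m-2*i)) := by
          apply Finset.sum_le_sum; intro i _
          exact mul_le_mul (hb₁ i) (hb₂ (m - 2*i)) (Nat.cast_nonneg _) (by positivity)
      _ = ∑ i ∈ Finset.range (m/2+1), (c₁*c₂*l1^m) * q^i := by
          apply Finset.sum_congr rfl; intro i hi
          rw [Finset.mem_range] at hi
          have hsplit : l1^m = l1^(2*i) * l1^(m - 2*i) := by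
            rw [← pow_add]; congr 1; omega
          have hl2sq : l2^2 = q * l1^2 := by
            rw [hq]; field_simp
          rw [hl2sq, mul_pow, ← pow_mul, hsplit]; ring
      _ = (c₁*c₂*l1^m) * ∑ i ∈ Finset.range (m/2+1), q^i := by rw [← Finset.mul_sum]
      _ ≤ (c₁*c₂*l1^m) * (1-q)⁻¹ := mul_le_mul_of_nonneg_left (hgeom _) (by positivity)
      _ = (c₁*c₂*(1-q)⁻¹) * l1^m := by ring
      _ ≤ (c₁*c₂*(1-q)⁻¹) * l^m := by
          apply mul_le_mul_of_nonneg_left (pow_le_pow_left₀ (le_of_lt hl1pos) (le_of_lt hl1l) m)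
          exact mul_nonneg (mul_nonneg hc₁.le hc₂.le) (inv_nonneg.2 h1q.le)
  · apply max_le
    · -- growthInd Mid ≤ growthInd H
      apply HPC.le_of_forall_gt
      intro l hl
      obtain ⟨hl0', c, hc, hb⟩ := mem_SG_of_gt hl
      apply growthInd_le_of_mem
      set N' := Fintype.card ((Q1 → Q1) × Q1 × (Q2 → Q2) × (Q2 → Q2)) with hN'
      have hmax1 : (1:ℝ) ≤ max 1 l := le_max_left _ _
      have hCm0 : (0:ℝ) < (max 1 l)^(2*N'+2*κ) := pow_pos (lt_of_lt_of_le one_pos hmax1) _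
      refine ⟨hl0', c * ((N':ℝ)+1) * (max 1 l)^(2*N'+2*κ),
        mul_pos (mul_pos hc (by positivity)) hCm0, ?_⟩
      intro j
      calc ((Set.ncard {w : List σ | w ∈ Mid bar κ L1 L2 ∧ w.length = j}) : ℝ)
          ≤ ((∑ g ∈ Finset.range (N'+1),
              Set.ncard {w : List σ | w ∈ hairpinCompletion bar κ L1 L2 ∧
                w.length = j + 2*g + 2*κ} : ℕ) : ℝ) :=
            Nat.cast_le.2 (cnt_Mid_le bar M1 M2 hM1 hM2 j)
        _ = ∑ g ∈ Finset.range (N'+1),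
              ((Set.ncard {w : List σ | w ∈ hairpinCompletion bar κ L1 L2 ∧
                w.length = j + 2*g + 2*κ}) : ℝ) := by push_cast; rfl
        _ ≤ ∑ g ∈ Finset.range (N'+1), c * l^(j+2*g+2*κ) :=
            Finset.sum_le_sum fun g _ => hb _
        _ ≤ ∑ g ∈ Finset.range (N'+1), c * ((max 1 l)^(2*N'+2*κ) * l^j) := by
            apply Finset.sum_le_sum; intro g hg
            rw [Finset.mem_range] at hg
            have e : l^(j+2*g+2*κ) = l^j * l^(2*g+2*κ) := by
              rw [show j+2*g+2*κ = j + (2*g+2*κ) from by omega, pow_add]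
            rw [e]
            have hh1 : l^(2*g+2*κ) ≤ (max 1 l)^(2*g+2*κ) :=
              pow_le_pow_left₀ hl0' (le_max_right _ _) _
            have hh2 : (max 1 l)^(2*g+2*κ) ≤ (max 1 l)^(2*N'+2*κ) :=
              pow_le_pow_right₀ hmax1 (by omega)
            calc c * (l^j * l^(2*g+2*κ)) ≤ c * (l^j * (max 1 l)^(2*N'+2*κ)) := by
                  apply mul_le_mul_of_nonneg_left ?_ hc.le
                  exact mul_le_mul_of_nonneg_left (le_trans hh1 hh2) (pow_nonneg hl0' j)
              _ = c * ((max 1 l)^(2*N'+2*κ) * l^j) := by ring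
        _ = ((N':ℝ)+1) * (c * ((max 1 l)^(2*N'+2*κ) * l^j)) := by
            rw [Finset.sum_const, Finset.card_range, nsmul_eq_mul]; push_cast; ring
        _ = c * ((N':ℝ)+1) * (max 1 l)^(2*N'+2*κ) * l^j := by ring
    · -- sqrt (growthInd MGP) ≤ growthInd H
      apply HPC.le_of_forall_gt
      intro l hl
      obtain ⟨hl0', c, hc, hb⟩ := mem_SG_of_gt hl
      have hMGP : growthInd (MGP bar κ L1 L2) ≤ l^2 := by
        apply growthInd_le_of_mem
        set N := Fintype.card ((Q1 → Q1) × (Q2 → Q2)) with hN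
        have hmax1 : (1:ℝ) ≤ max 1 l := le_max_left _ _
        have hCm0 : (0:ℝ) < (max 1 l)^N := pow_pos (lt_of_lt_of_le one_pos hmax1) _
        refine ⟨by positivity, c * ((N:ℝ)+1) * (max 1 l)^N,
          mul_pos (mul_pos hc (by positivity)) hCm0, ?_⟩
        intro i
        calc ((Set.ncard {w : List σ | w ∈ MGP bar κ L1 L2 ∧ w.length = i}) : ℝ)
            ≤ ((∑ b ∈ Finset.range (N+1),
                Set.ncard {w : List σ | w ∈ hairpinCompletion bar κ L1 L2 ∧
                  w.length = 2*i + b} : ℕ) : ℝ) :=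
              Nat.cast_le.2 (cnt_MGP_le bar M1 M2 hM1 hM2 i)
          _ = ∑ b ∈ Finset.range (N+1),
                ((Set.ncard {w : List σ | w ∈ hairpinCompletion bar κ L1 L2 ∧
                  w.length = 2*i + b}) : ℝ) := by push_cast; rfl
          _ ≤ ∑ b ∈ Finset.range (N+1), c * l^(2*i+b) :=
              Finset.sum_le_sum fun b _ => hb _
          _ ≤ ∑ b ∈ Finset.range (N+1), c * ((max 1 l)^N * (l^2)^i) := by
              apply Finset.sum_le_sum; intro b hbmem
              rw [Finset.mem_range] at hbmem
              have e : l^(2*i+b) = (l^2)^i * l^b := by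
                rw [pow_add, pow_mul]
              rw [e]
              have hh1 : l^b ≤ (max 1 l)^b := pow_le_pow_left₀ hl0' (le_max_right _ _) _
              have hh2 : (max 1 l)^b ≤ (max 1 l)^N := pow_le_pow_right₀ hmax1 (by omega)
              calc c * ((l^2)^i * l^b) ≤ c * ((l^2)^i * (max 1 l)^N) := by
                    apply mul_le_mul_of_nonneg_left ?_ hc.le
                    exact mul_le_mul_of_nonneg_left (le_trans hh1 hh2) (by positivity)
                _ = c * ((max 1 l)^N * (l^2)^i) := by ring
          _ = ((N:ℝ)+1) * (c * ((max 1 l)^N * (l^2)^i)) := by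
              rw [Finset.sum_const, Finset.card_range, nsmul_eq_mul]; push_cast; ring
          _ = c * ((N:ℝ)+1) * (max 1 l)^N * (l^2)^i := by ring
      calc Real.sqrt (growthInd (MGP bar κ L1 L2)) ≤ Real.sqrt (l^2) := Real.sqrt_le_sqrt hMGP
        _ = l := by rw [Real.sqrt_sq hl0']
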